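/- Let G be a finite group, N ≤ G a subgroup of index 2, and I a finite G-set of odd cardinality r with r′ orbits, such that N acts transitively on each G-orbit of I. Let M be the G-lattice with ℤ-basis {e_i : i ∈ I} ∪ {f} and G-action given by: for σ ∈ N, σ·e_i = e_{σ·i} and σ·f = f; for σ ∈ G∖N, σ·e_i = −e_{σ·i} and σ·f = f − Σ_{i∈I} e_i. Let Z = {x ∈ M : Σ_{σ∈G} σ·x = 0} and let B be the ℤ-submodule of M generated by {σ·x − x : σ ∈ G, x ∈ M}. Then the quotient Z/B is isomorphic as an abelian group to (ℤ/2ℤ)^{r′−1}. -/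

import Mathlib

open MulAction Finset
open scoped Classical

set_option linter.unusedSectionVars false
set_option maxHeartbeats 1000000

noncomputable section TateAux

variable (G : Type) [Group G] (I : Type) [Fintype I] [MulAction G I]

abbrev TateΩ := MulAction.orbitRel.Quotient G I

noncomputable instance : Fintype (TateΩ G I) := Fintype.ofFinite _

def tateQ : I → TateΩ G I := Quotient.mk''

lemma tateQ_smul (σ : G) (i : I) : tateQ G I (σ • i) = tateQ G I i :=
  Quotient.sound' (MulAction.mem_orbit i σ)

lemma tateQ_out (O : TateΩ G I) : tateQ G I (Quotient.out O) = O :=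
  Quotient.out_eq' O

def tateT : ((I → ℤ) × ℤ) →ₗ[ℤ] (TateΩ G I → ZMod 2) where
  toFun x O := ∑ i : I, if tateQ G I i = O then ((x.1 i : ZMod 2)) else 0
  map_add' x y := by
    funext O
    show _ = (∑ i : I, if tateQ G I i = O then ((x.1 i : ZMod 2)) else 0)
      + (∑ i : I, if tateQ G I i = O then ((y.1 i : ZMod 2)) else 0)
    rw [← Finset.sum_add_distrib]
    refine Finset.sum_congr rfl fun i _ => ?_
    split <;> simp
  map_smul' c x := by
    funext O
    show _ = c • (∑ i : I, if tateQ G I i = O then ((x.1 i : ZMod 2)) else 0)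
    rw [Finset.smul_sum]
    refine Finset.sum_congr rfl fun i _ => ?_
    split <;> simp [zsmul_eq_mul]

lemma tateT_apply (x : (I → ℤ) × ℤ) (O : TateΩ G I) :
    tateT G I x O = ∑ i : I, if tateQ G I i = O then ((x.1 i : ZMod 2)) else 0 := rfl

lemma tateT_comp (σ : G) (v : I → ℤ) (c c' : ℤ) :
    tateT G I (fun j => v (σ⁻¹ • j), c) = tateT G I (v, c') := by
  funext O
  rw [tateT_apply, tateT_apply]
  refine Fintype.sum_equiv (MulAction.toPerm σ⁻¹) _ _ fun i => ?_
  simp [MulAction.toPerm, tateQ_smul, inv_smul_smul]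

def tateχ : TateΩ G I → ZMod 2 := tateT G I (fun _ => 1, 0)

lemma tateχ_apply (O : TateΩ G I) :
    tateχ G I O = ∑ i : I, if tateQ G I i = O then (1 : ZMod 2) else 0 := rfl

lemma sum_tateχ : ∑ O : TateΩ G I, tateχ G I O = (Fintype.card I : ZMod 2) := by
  simp only [tateχ_apply]
  rw [Finset.sum_comm]
  simp [Finset.sum_ite_eq]

/-- the auxiliary projection killing `χ`. -/
def tateψ {Ω : Type} (χ : Ω → ZMod 2) (O₀ : Ω) :
    (Ω → ZMod 2) →ₗ[ℤ] (({P : Ω // P ≠ O₀}) → ZMod 2) where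
  toFun w P := w P.1 + χ P.1 * w O₀
  map_add' w₁ w₂ := by funext P; simp; ring
  map_smul' c w := by funext P; simp [zsmul_eq_mul]; ring

lemma tateψ_apply {Ω : Type} (χ : Ω → ZMod 2) (O₀ : Ω) (w : Ω → ZMod 2)
    (P : {P : Ω // P ≠ O₀}) : tateψ χ O₀ w P = w P.1 + χ P.1 * w O₀ := rfl

lemma tateψ_χ {Ω : Type} (χ : Ω → ZMod 2) (O₀ : Ω) (h : χ O₀ = 1) :
    tateψ χ O₀ χ = 0 := by
  funext P
  rw [tateψ_apply, h, mul_one]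
  exact CharTwo.add_self_eq_zero _

lemma zmod2_neg (a : ZMod 2) : -a = a := by revert a; decide
lemma zmod2_ne (a : ZMod 2) (h : a ≠ 0) : a = 1 := by revert a h; decide

end TateAux

theorem tate_neg_one_odd_case
    (G : Type) [Group G] [Fintype G] (N : Subgroup G) (hN : N.index = 2)
    (I : Type) [Fintype I] [MulAction G I]
    (r r' : ℕ) (hr : Fintype.card I = r) (hodd : Odd r)
    (hr' : Nat.card (MulAction.orbitRel.Quotient G I) = r')
    (htrans : ∀ i j : I, j ∈ MulAction.orbit G i → ∃ σ ∈ N, σ • i = j)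
    (ρ : Representation ℤ G ((I → ℤ) × ℤ))
    (hρN : ∀ σ ∈ N, ∀ (v : I → ℤ) (c : ℤ),
      ρ σ (v, c) = (fun j => v (σ⁻¹ • j), c))
    (hρ : ∀ σ ∉ N, ∀ (v : I → ℤ) (c : ℤ),
      ρ σ (v, c) = (fun j => -v (σ⁻¹ • j) - c, c)) :
    Nonempty
      ((LinearMap.ker (∑ σ : G, ρ σ) ⧸
        (Submodule.span ℤ {x : (I → ℤ) × ℤ | ∃ σ : G, ∃ y, x = ρ σ y - y}).comap
          (LinearMap.ker (∑ σ : G, ρ σ)).subtype) ≃+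
      (Fin (r' - 1) → ZMod 2)) := by
  classical
  -- an element outside N
  have hτ' : ∃ τ : G, τ ∉ N := by
    by_contra h
    push_neg at h
    have : N = ⊤ := (Subgroup.eq_top_iff' N).2 h
    rw [this, Subgroup.index_top] at hN
    exact absurd hN (by norm_num)
  obtain ⟨τ, hτ⟩ := hτ'
  -- second component of the norm
  have nm_snd : ∀ x : (I → ℤ) × ℤ, ((∑ σ : G, ρ σ) x).2 = (Fintype.card G : ℤ) * x.2 := by
    rintro ⟨v, c⟩
    rw [LinearMap.sum_apply, Prod.snd_sum]
    have : ∀ σ : G, (ρ σ (v, c)).2 = c := by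
      intro σ
      by_cases h : σ ∈ N
      · rw [hρN σ h]
      · rw [hρ σ h]
    rw [Finset.sum_congr rfl fun σ _ => this σ]
    simp [mul_comm]
  -- first component of the norm on c = 0
  have nm_fst : ∀ (v : I → ℤ) (j : I), ((∑ σ : G, ρ σ) (v, 0)).1 j = 0 := by
    intro v j
    rw [LinearMap.sum_apply, Prod.fst_sum, Finset.sum_apply]
    have hterm : ∀ σ : G, (ρ σ (v, 0)).1 j
        = if σ ∈ N then v (σ⁻¹ • j) else -v (σ⁻¹ • j) := by
      intro σ
      by_cases h : σ ∈ N
      · rw [hρN σ h, if_pos h]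
      · rw [hρ σ h, if_neg h]
        simp
    rw [Finset.sum_congr rfl fun σ _ => hterm σ]
    rw [← Finset.sum_filter_add_sum_filter_not Finset.univ (· ∈ N)]
    have h1 : ∑ σ ∈ Finset.univ.filter (· ∈ N),
        (if σ ∈ N then v (σ⁻¹ • j) else -v (σ⁻¹ • j)) =
        ∑ σ ∈ Finset.univ.filter (· ∈ N), v (σ⁻¹ • j) := by
      refine Finset.sum_congr rfl fun σ hσ => ?_
      rw [if_pos (Finset.mem_filter.1 hσ).2]
    have h2 : ∑ σ ∈ Finset.univ.filter (¬ · ∈ N),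
        (if σ ∈ N then v (σ⁻¹ • j) else -v (σ⁻¹ • j)) =
        - ∑ σ ∈ Finset.univ.filter (¬ · ∈ N), v (σ⁻¹ • j) := by
      rw [← Finset.sum_neg_distrib]
      refine Finset.sum_congr rfl fun σ hσ => ?_
      rw [if_neg (Finset.mem_filter.1 hσ).2]
    rw [h1, h2]
    obtain ⟨ν, hν, hνj⟩ := htrans j (τ⁻¹ • j) ⟨τ⁻¹, rfl⟩
    have hτν : τ * ν ∉ N := fun h => hτ (by simpa using N.mul_mem h (N.inv_mem hν))
    have key : ∑ σ ∈ Finset.univ.filter (· ∈ N), v (σ⁻¹ • j) =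
        ∑ σ ∈ Finset.univ.filter (¬ · ∈ N), v (σ⁻¹ • j) := by
      refine Finset.sum_nbij' (fun σ => τ * ν * σ) (fun σ => (τ * ν)⁻¹ * σ)
        ?_ ?_ ?_ ?_ ?_
      · intro a ha
        simp only [Finset.mem_filter, Finset.mem_univ, true_and] at ha ⊢
        rw [mul_assoc, Subgroup.mul_mem_iff_of_index_two hN]
        simp [hτ, N.mul_mem hν ha]
      · intro a ha
        simp only [Finset.mem_filter, Finset.mem_univ, true_and] at ha ⊢
        rw [Subgroup.mul_mem_iff_of_index_two hN]
        have hh : ν⁻¹ * τ⁻¹ ∉ N := fun h => hτν (N.inv_mem_iff.1 (by rwa [mul_inv_rev]))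
        simp [ha, hh]
      · intro a _; group
      · intro a _; group
      · intro a ha
        have : (τ * ν * a)⁻¹ • j = a⁻¹ • j := by
          rw [mul_assoc, mul_inv_rev, mul_smul, mul_inv_rev, mul_smul, ← hνj,
            inv_smul_smul]
        rw [this]
    rw [key]; ring
  -- the kernel of the norm
  have hker : ∀ x : (I → ℤ) × ℤ, x ∈ LinearMap.ker (∑ σ : G, ρ σ) ↔ x.2 = 0 := by
    rintro ⟨v, c⟩
    constructor
    · intro h
      have h2 := congrArg Prod.snd (LinearMap.mem_ker.1 h)
      rw [nm_snd] at h2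
      have hcard : (Fintype.card G : ℤ) ≠ 0 := by
        exact_mod_cast Fintype.card_ne_zero
      simpa [hcard] using h2
    · intro h
      simp only at h
      subst h
      refine LinearMap.mem_ker.2 (Prod.ext ?_ ?_)
      · funext j; exact nm_fst v j
      · rw [nm_snd]; simp
  -- choose an orbit of odd cardinality
  have hχsum : ∑ O : TateΩ G I, tateχ G I O = 1 := by
    rw [sum_tateχ, hr]
    obtain ⟨k, hk⟩ := hodd
    subst hk
    push_cast
    have : (2 : ZMod 2) = 0 := by decide
    rw [this]
    ring
  have hO₀ : ∃ O₀ : TateΩ G I, tateχ G I O₀ = 1 := by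
    by_contra h
    push_neg at h
    have hz : ∀ O : TateΩ G I, tateχ G I O = 0 := fun O => by
      by_contra h0; exact h O (zmod2_ne _ h0)
    rw [Finset.sum_congr rfl fun O _ => hz O] at hχsum
    simpa using hχsum
  obtain ⟨O₀, hO₀⟩ := hO₀
  -- the full map Ψ : M → functions on nontrivial orbits
  set B : Submodule ℤ ((I → ℤ) × ℤ) :=
    Submodule.span ℤ {x : (I → ℤ) × ℤ | ∃ σ : G, ∃ y, x = ρ σ y - y} with hB
  set Ψ : ((I → ℤ) × ℤ) →ₗ[ℤ] (({P : TateΩ G I // P ≠ O₀}) → ZMod 2) :=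
    (tateψ (tateχ G I) O₀) ∘ₗ (tateT G I) with hΨ
  -- T of the "minus" twist
  have hTneg : ∀ (σ : G) (v : I → ℤ) (c : ℤ),
      tateT G I (fun j => -v (σ⁻¹ • j) - c, c)
        = tateT G I (v, c) + (c : ℤ) • tateχ G I := by
    intro σ v c
    have step1 : tateT G I (fun j => -v (σ⁻¹ • j) - c, c)
        = tateT G I (fun j => v (σ⁻¹ • j), c) + (c : ℤ) • tateχ G I := by
      funext O
      rw [Pi.add_apply, tateT_apply, tateT_apply, Pi.smul_apply, tateχ_apply,
        Finset.smul_sum, ← Finset.sum_add_distrib]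
      refine Finset.sum_congr rfl fun i _ => ?_
      split
      · push_cast [sub_eq_add_neg]
        simp only [zmod2_neg, zsmul_eq_mul, mul_one]
      · simp
    rw [step1, tateT_comp G I σ v c c]
  -- B is contained in the kernel of Ψ
  have hBker : B ≤ LinearMap.ker Ψ := by
    rw [hB, Submodule.span_le]
    rintro x ⟨σ, ⟨v, c⟩, rfl⟩
    simp only [SetLike.mem_coe, LinearMap.mem_ker, hΨ, LinearMap.comp_apply, map_sub]
    by_cases h : σ ∈ N
    · rw [hρN σ h, tateT_comp G I σ v c c]
      simp
    · rw [hρ σ h, hTneg σ v c]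
      rw [map_add, map_smul, tateψ_χ _ _ hO₀]
      simp
  -- the constant vector is in B
  have hconst : ((fun _ => (1:ℤ)), (0:ℤ)) ∈ B := by
    rw [hB]
    refine Submodule.subset_span ⟨τ, ((fun _ => 0), -1), ?_⟩
    rw [hρ τ hτ (fun _ => 0) (-1)]
    refine Prod.ext ?_ ?_
    · funext j; simp
    · simp
  -- difference of two basis vectors in the same orbit is in B
  have hdiff : ∀ i k : I, tateQ G I i = tateQ G I k →
      ((fun j => (if j = i then (1:ℤ) else 0) - (if j = k then (1:ℤ) else 0)), (0:ℤ)) ∈ B := by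
    intro i k hik
    have horb : i ∈ MulAction.orbit G k := by
      rw [← MulAction.orbitRel_apply]
      exact Quotient.exact' hik
    obtain ⟨ν, hν, hνk⟩ := htrans k i horb
    rw [hB]
    refine Submodule.subset_span ⟨ν, ((fun j => if j = k then (1:ℤ) else 0), 0), ?_⟩
    rw [hρN ν hν]
    refine Prod.ext ?_ ?_
    · funext j
      have hcond : (ν⁻¹ • j = k) = (j = i) := by
        simp only [eq_iff_iff]; rw [inv_smul_eq_iff, hνk]
      simp only [Prod.fst_sub, Pi.sub_apply, hcond]
    · simp
  -- twice a basis vector is in B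
  have htwo : ∀ k : I, ((fun j => if j = k then (2:ℤ) else 0), (0:ℤ)) ∈ B := by
    intro k
    have g1 : (ρ τ ((fun j => if j = k then (1:ℤ) else 0), 0)
        - ((fun j => if j = k then (1:ℤ) else 0), 0)) ∈ B := by
      rw [hB]; exact Submodule.subset_span ⟨τ, _, rfl⟩
    have g2 := hdiff (τ • k) k (tateQ_smul G I τ k)
    have := Submodule.neg_mem B (Submodule.add_mem B g1 g2)
    convert this using 1
    rw [hρ τ hτ]
    refine Prod.ext ?_ ?_
    · funext j
      have hcond : (τ⁻¹ • j = k) = (j = τ • k) := by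
        simp only [eq_iff_iff]; rw [inv_smul_eq_iff]
      simp only [Prod.fst_neg, Prod.fst_add, Prod.fst_sub, Pi.neg_apply, Pi.add_apply,
        Pi.sub_apply, hcond]
      by_cases hj : j = k <;> by_cases hj' : j = τ • k <;> simp [hj, hj'] <;>
        (try (by_cases h2 : τ • k = k <;> simp [h2])) <;> (try ring) <;> omega
    · simp
  -- main membership lemma: even orbit sums imply membership in B
  have heven : ∀ u : I → ℤ, (∀ O, tateT G I (u, 0) O = 0) → (u, (0:ℤ)) ∈ B := by
    intro u hu
    set rep : TateΩ G I → I := fun O => Quotient.out O with hrep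
    set S : TateΩ G I → ℤ := fun O => ∑ i : I, if tateQ G I i = O then u i else 0 with hS
    have hSdvd : ∀ O, (2:ℤ) ∣ S O := by
      intro O
      have := hu O
      rw [tateT_apply] at this
      have hcast : ((S O : ℤ) : ZMod 2) = 0 := by
        rw [hS, ← this]
        push_cast
        refine Finset.sum_congr rfl fun i _ => ?_
        split <;> simp
      exact_mod_cast (ZMod.intCast_zmod_eq_zero_iff_dvd (S O) 2).1 hcast
    set m : TateΩ G I → ℤ := fun O => S O / 2 with hm
    have hm2 : ∀ O, 2 * m O = S O := fun O => Int.mul_ediv_cancel' (hSdvd O)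
    have hmem : (∑ i : I, u i • (((fun j => if j = i then (1:ℤ) else 0), (0:ℤ))
          - ((fun j => if j = rep (tateQ G I i) then (1:ℤ) else 0), (0:ℤ))))
        + (∑ O : TateΩ G I, m O • ((fun j => if j = rep O then (2:ℤ) else 0), (0:ℤ))) ∈ B := by
      refine Submodule.add_mem B (Submodule.sum_mem B fun i _ => ?_)
        (Submodule.sum_mem B fun O _ => ?_)
      · refine Submodule.smul_mem B _ ?_
        have := hdiff i (rep (tateQ G I i)) ?_
        · convert this using 2 <;> simp [Pi.sub_def]
        · rw [hrep]; exact (tateQ_out G I (tateQ G I i)).symm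
      · exact Submodule.smul_mem B _ (htwo (rep O))
    convert hmem using 1
    refine Prod.ext ?_ ?_
    · funext j
      simp only [Prod.fst_add, Prod.fst_sum, Finset.sum_apply, Pi.add_apply]
      have e1 : ∀ i : I, (u i • (((fun j => if j = i then (1:ℤ) else 0), (0:ℤ))
            - ((fun j => if j = rep (tateQ G I i) then (1:ℤ) else 0), (0:ℤ)))).1 j
          = (if j = i then u i else 0) - (if j = rep (tateQ G I i) then u i else 0) := by
        intro i
        simp only [Prod.smul_fst, Prod.fst_sub, Pi.smul_apply, Pi.sub_apply, smul_eq_mul]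
        split <;> split <;> ring
      have e2 : ∀ O : TateΩ G I, (m O • ((fun j => if j = rep O then (2:ℤ) else 0), (0:ℤ))).1 j
          = if j = rep O then 2 * m O else 0 := by
        intro O
        simp only [Prod.smul_fst, Pi.smul_apply, smul_eq_mul]
        split <;> ring
      rw [Finset.sum_congr rfl fun i _ => e1 i, Finset.sum_congr rfl fun O _ => e2 O]
      rw [Finset.sum_sub_distrib]
      have s1 : ∑ i : I, (if j = i then u i else 0) = u j := by
        rw [Finset.sum_ite_eq]
        simp
      have s2 : ∑ i : I, (if j = rep (tateQ G I i) then u i else 0)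
          = ∑ O : TateΩ G I, if j = rep O then S O else 0 := by
        have inner : ∀ i : I, (if j = rep (tateQ G I i) then u i else 0)
            = ∑ O : TateΩ G I, if tateQ G I i = O then (if j = rep O then u i else 0) else 0 := by
          intro i
          rw [Finset.sum_ite_eq]
          simp
        rw [Finset.sum_congr rfl fun i _ => inner i, Finset.sum_comm]
        refine Finset.sum_congr rfl fun O _ => ?_
        by_cases hj : j = rep O
        · rw [if_pos hj, hS]
          refine Finset.sum_congr rfl fun i _ => ?_
          split <;> simp [hj]
        · rw [if_neg hj]
          refine Finset.sum_eq_zero fun i _ => ?_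
          split <;> simp [hj]
      have s3 : ∑ O : TateΩ G I, (if j = rep O then 2 * m O else 0)
          = ∑ O : TateΩ G I, if j = rep O then S O else 0 := by
        refine Finset.sum_congr rfl fun O _ => ?_
        split
        · rw [hm2]
        · rfl
      rw [s1, s2, s3]
      ring
    · simp only [Prod.snd_add, Prod.snd_sum]
      have : ∀ i : I, (u i • (((fun j => if j = i then (1:ℤ) else 0), (0:ℤ))
            - ((fun j => if j = rep (tateQ G I i) then (1:ℤ) else 0), (0:ℤ)))).2 = 0 := by
        intro i; simp
      rw [Finset.sum_congr rfl fun i _ => this i]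
      have : ∀ O : TateΩ G I, (m O • ((fun j => if j = rep O then (2:ℤ) else 0), (0:ℤ))).2 = 0 := by
        intro O; simp
      rw [Finset.sum_congr rfl fun O _ => this O]
      simp
  -- Φ : Z → target
  set Φ : (LinearMap.ker (∑ σ : G, ρ σ)) →ₗ[ℤ] (({P : TateΩ G I // P ≠ O₀}) → ZMod 2) :=
    Ψ ∘ₗ (LinearMap.ker (∑ σ : G, ρ σ)).subtype with hΦ
  -- surjectivity
  have hsurj : Function.Surjective Φ := by
    intro t
    set w : TateΩ G I → ZMod 2 := fun O => if h : O = O₀ then 0 else t ⟨O, h⟩ with hw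
    set v : I → ℤ := fun i => if i = Quotient.out (tateQ G I i)
      then ((w (tateQ G I i)).val : ℤ) else 0 with hv
    have hmem : ((v, (0:ℤ)) : (I → ℤ) × ℤ) ∈ LinearMap.ker (∑ σ : G, ρ σ) :=
      (hker (v, 0)).2 rfl
    refine ⟨⟨(v, 0), hmem⟩, ?_⟩
    have hTv : ∀ O, tateT G I (v, 0) O = w O := by
      intro O
      rw [tateT_apply]
      rw [Finset.sum_eq_single (Quotient.out O)]
      · rw [if_pos (tateQ_out G I O), hv]
        simp only [tateQ_out G I O, if_pos rfl]
        push_cast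
        rw [ZMod.natCast_val, ZMod.cast_id]
      · intro i _ hi
        split
        · rw [hv]
          simp only
          split
          · next h1 h2 => exact absurd (h2.trans (congrArg _ h1)) hi
          · simp
        · rfl
      · intro h; exact absurd (Finset.mem_univ _) h
    funext P
    rw [hΦ]
    simp only [LinearMap.comp_apply, Submodule.coe_subtype]
    rw [hΨ]
    simp only [LinearMap.comp_apply]
    rw [tateψ_apply]
    have hfun : tateT G I (v, 0) = w := funext hTv
    rw [hfun, hw]
    simp [dif_neg P.2]
  -- kernel identification
  have hkerΦ : LinearMap.ker Φ
      = B.comap (LinearMap.ker (∑ σ : G, ρ σ)).subtype := by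
    refine le_antisymm ?_ ?_
    · intro x hx
      rw [LinearMap.mem_ker, hΦ, LinearMap.comp_apply] at hx
      rw [Submodule.mem_comap]
      obtain ⟨⟨u, c⟩, hu⟩ := x
      have hc : c = 0 := (hker (u, c)).1 hu
      subst hc
      simp only [Submodule.coe_subtype] at hx ⊢
      -- hx : Ψ (u, 0) = 0
      set a : ℤ := ((tateT G I (u, 0) O₀).val : ℤ) with ha
      have hacast : ((a : ℤ) : ZMod 2) = tateT G I (u, 0) O₀ := by
        rw [ha]; push_cast; rw [ZMod.natCast_val, ZMod.cast_id]
      set u' : I → ℤ := fun i => u i - a with hu'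
      have hT' : ∀ O, tateT G I (u', 0) O = tateT G I (u, 0) O - (a : ZMod 2) * tateχ G I O := by
        intro O
        rw [tateT_apply, tateT_apply, tateχ_apply, Finset.mul_sum, ← Finset.sum_sub_distrib]
        refine Finset.sum_congr rfl fun i _ => ?_
        split
        · rw [hu']; push_cast; ring
        · simp
      have hzero : ∀ O, tateT G I (u', 0) O = 0 := by
        intro O
        by_cases hOO : O = O₀
        · subst hOO
          rw [hT', hO₀, mul_one, hacast, sub_self]
        · have hP := congrFun hx ⟨O, hOO⟩
          rw [hΨ] at hP
          simp only [LinearMap.comp_apply] at hP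
          rw [tateψ_apply] at hP
          simp only [Pi.zero_apply] at hP
          -- hP : T(u,0) O + χ O * T(u,0) O₀ = 0
          have hTO : tateT G I (u, 0) O = tateχ G I O * tateT G I (u, 0) O₀ := by
            have := hP
            rw [add_eq_zero_iff_eq_neg] at this
            rw [this, zmod2_neg]
          rw [hT', hTO, hacast]
          ring
      have hmem' : (u', (0:ℤ)) ∈ B := heven u' hzero
      have hdecomp : ((u, (0:ℤ)) : (I → ℤ) × ℤ)
          = (u', 0) + a • ((fun _ => (1:ℤ)), (0:ℤ)) := by
        refine Prod.ext ?_ ?_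
        · funext j
          simp only [Prod.fst_add, Pi.add_apply, Prod.smul_fst, Pi.smul_apply, smul_eq_mul,
            hu']
          ring
        · simp
      rw [hdecomp]
      exact Submodule.add_mem B hmem' (Submodule.smul_mem B a hconst)
    · intro x hx
      rw [Submodule.mem_comap] at hx
      rw [LinearMap.mem_ker, hΦ, LinearMap.comp_apply]
      exact LinearMap.mem_ker.1 (hBker hx)
  -- assemble
  have hcardΩ : Fintype.card {P : TateΩ G I // P ≠ O₀} = r' - 1 := by
    have h1 : Fintype.card (TateΩ G I) = r' := by
      rw [← Nat.card_eq_fintype_card]; exact hr'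
    rw [Fintype.card_subtype_compl (· = O₀), Fintype.card_subtype_eq, h1]
  have e1 : (LinearMap.ker (∑ σ : G, ρ σ) ⧸
        B.comap (LinearMap.ker (∑ σ : G, ρ σ)).subtype)
      ≃ₗ[ℤ] ({P : TateΩ G I // P ≠ O₀} → ZMod 2) :=
    (Submodule.quotEquivOfEq _ _ hkerΦ.symm).trans
      (LinearMap.quotKerEquivOfSurjective Φ hsurj)
  have e2 : ({P : TateΩ G I // P ≠ O₀} → ZMod 2) ≃ₗ[ℤ] (Fin (r' - 1) → ZMod 2) :=
    LinearEquiv.funCongrLeft ℤ (ZMod 2) (Fintype.equivFinOfCardEq hcardΩ).symm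
  exact ⟨(e1.trans e2).toAddEquiv⟩
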